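/- arXiv:2602.21191 — 2 statements merged into one kernel-verified Lean document; each statement's English description precedes it below -/
import Mathlib

section
/- For every k ∈ ℕ and ρ ∈ (0,1), the normalized probabilist's Hermite polynomial h_k is an eigenfunction of the Ornstein–Uhlenbeck operator: U_ρ h_k = ρ^k h_k. -/
open MeasureTheory ProbabilityTheory

/-- The Ornstein–Uhlenbeck operator on functions `ℝ → ℝ`. -/
noncomputable def ouOp (ρ : ℝ) (f : ℝ → ℝ) (x : ℝ) : ℝ :=
  ∫ z, f (ρ * x + Real.sqrt (1 - ρ ^ 2) * z) ∂(gaussianReal 0 1)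

/-- The `k`-th normalized probabilist's Hermite polynomial `h_k = He_k / √(k!)`. -/
noncomputable def normalizedHermite (k : ℕ) (t : ℝ) : ℝ :=
  ((Polynomial.hermite k).map (Int.castRingHom ℝ)).eval t / Real.sqrt (Nat.factorial k)

section Aux

open Polynomial Real
open scoped ENNReal NNReal


noncomputable def Hr (n : ℕ) : Polynomial ℝ := (Polynomial.hermite n).map (Int.castRingHom ℝ)

lemma Hr_zero : Hr 0 = 1 := by simp [Hr, hermite_zero]

lemma Hr_succ (n : ℕ) : Hr (n + 1) = X * Hr n - derivative (Hr n) := by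
  simp [Hr, hermite_succ, Polynomial.map_sub, Polynomial.map_mul, derivative_map]

lemma derivative_hermite_int (n : ℕ) :
    derivative (hermite (n + 1)) = ((n : ℤ[X]) + 1) * hermite n := by
  induction n with
  | zero => simp [hermite_one, hermite_zero]
  | succ n ih =>
    rw [hermite_succ (n + 1), derivative_sub, derivative_mul, derivative_X, ih]
    rw [derivative_mul, hermite_succ n]
    simp only [derivative_add, derivative_natCast, derivative_one]
    push_cast
    ring

lemma derivative_Hr (n : ℕ) :
    derivative (Hr (n + 1)) = ((n : Polynomial ℝ) + 1) * Hr n := by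
  unfold Hr
  rw [derivative_map, derivative_hermite_int, Polynomial.map_mul, Polynomial.map_add,
    Polynomial.map_one, Polynomial.map_natCast]

lemma integrable_pow_gaussian (n : ℕ) :
    Integrable (fun z : ℝ => z ^ n * Real.exp (-(z ^ 2 / 2))) := by
  have h := integrable_rpow_mul_exp_neg_mul_sq (b := 1/2) (by norm_num)
    (s := (n : ℝ)) (by exact_mod_cast lt_of_lt_of_le neg_one_lt_zero (Nat.cast_nonneg n))
  convert h using 2 with z
  rw [Real.rpow_natCast]
  ring_nf

lemma integrable_poly_gaussian (p : Polynomial ℝ) :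
    Integrable (fun z : ℝ => p.eval z * Real.exp (-(z ^ 2 / 2))) := by
  induction p using Polynomial.induction_on' with
  | add p q hp hq => simpa [add_mul, Pi.add_def] using hp.add hq
  | monomial n a =>
    simpa [mul_assoc] using (integrable_pow_gaussian n).const_mul a

lemma pdfReal_eq (z : ℝ) :
    gaussianPDFReal 0 1 z = (Real.sqrt (2 * π))⁻¹ * Real.exp (-(z ^ 2 / 2)) := by
  rw [gaussianPDFReal]
  norm_num
  left; ring

lemma gaussianReal_eq_withDensity :
    (gaussianReal 0 1 : Measure ℝ) =
      volume.withDensity fun z => ((gaussianPDFReal 0 1 z).toNNReal : ℝ≥0∞) := by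
  rw [gaussianReal_of_var_ne_zero 0 one_ne_zero]
  rfl

lemma integral_gaussianReal_eq (f : ℝ → ℝ) :
    ∫ z, f z ∂(gaussianReal 0 1) = ∫ z, gaussianPDFReal 0 1 z * f z := by
  rw [gaussianReal_eq_withDensity,
    integral_withDensity_eq_integral_smul ((measurable_gaussianPDFReal 0 1).real_toNNReal) f]
  congr 1
  funext z
  simp [NNReal.smul_def, Real.coe_toNNReal _ (gaussianPDFReal_nonneg 0 1 z)]

lemma integrable_gaussianReal_poly (p : Polynomial ℝ) :
    Integrable (fun z => p.eval z) (gaussianReal 0 1) := by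
  rw [gaussianReal_eq_withDensity,
    integrable_withDensity_iff_integrable_smul ((measurable_gaussianPDFReal 0 1).real_toNNReal)]
  have h := (integrable_poly_gaussian p).const_mul (Real.sqrt (2 * π))⁻¹
  refine h.congr (Filter.Eventually.of_forall fun z => ?_)
  show _ = (gaussianPDFReal 0 1 z).toNNReal • eval z p
  rw [NNReal.smul_def, Real.coe_toNNReal _ (gaussianPDFReal_nonneg 0 1 z), pdfReal_eq, smul_eq_mul]
  ring

lemma ibp_vol (p : Polynomial ℝ) :
    ∫ z, (derivative p).eval z * Real.exp (-(z ^ 2 / 2)) =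
      ∫ z, (z * p.eval z) * Real.exp (-(z ^ 2 / 2)) := by
  have hint : Integrable (fun z : ℝ =>
      ((derivative p).eval z - z * p.eval z) * Real.exp (-(z ^ 2 / 2))) := by
    have h := integrable_poly_gaussian (derivative p - X * p)
    simp only [eval_sub, eval_mul, eval_X] at h
    exact h
  have hf : Integrable (fun z : ℝ => p.eval z * Real.exp (-(z ^ 2 / 2))) :=
    integrable_poly_gaussian p
  have hderiv : ∀ z : ℝ, HasDerivAt (fun z => p.eval z * Real.exp (-(z ^ 2 / 2)))
      (((derivative p).eval z - z * p.eval z) * Real.exp (-(z ^ 2 / 2))) z := by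
    intro z
    have h1 : HasDerivAt (fun z : ℝ => -(z ^ 2 / 2)) (-z) z := by
      exact (((hasDerivAt_pow 2 z).div_const 2).neg).congr_deriv (by norm_num)
    have h3 := (p.hasDerivAt z).mul h1.exp
    exact h3.congr_deriv (by ring)
  have h0 := integral_eq_zero_of_hasDerivAt_of_integrable hderiv hint hf
  have h1 : Integrable (fun z : ℝ => (derivative p).eval z * Real.exp (-(z ^ 2 / 2))) :=
    integrable_poly_gaussian (derivative p)
  have h2 : Integrable (fun z : ℝ => (z * p.eval z) * Real.exp (-(z ^ 2 / 2))) := by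
    have h := integrable_poly_gaussian (X * p)
    simp only [eval_mul, eval_X] at h
    exact h
  have := integral_sub h1 h2
  simp_rw [sub_mul] at h0
  rw [integral_sub h1 h2] at h0
  linarith

lemma ibp_gauss (p : Polynomial ℝ) :
    ∫ z, (derivative p).eval z ∂(gaussianReal 0 1) =
      ∫ z, z * p.eval z ∂(gaussianReal 0 1) := by
  rw [integral_gaussianReal_eq, integral_gaussianReal_eq]
  simp_rw [pdfReal_eq, mul_assoc, integral_const_mul]
  congr 1
  rw [show (fun z : ℝ => Real.exp (-(z ^ 2 / 2)) * (derivative p).eval z) =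
      (fun z : ℝ => (derivative p).eval z * Real.exp (-(z ^ 2 / 2))) from
      funext fun z => by ring,
    show (fun z : ℝ => Real.exp (-(z ^ 2 / 2)) * (z * p.eval z)) =
      (fun z : ℝ => (z * p.eval z) * Real.exp (-(z ^ 2 / 2))) from
      funext fun z => by ring]
  exact ibp_vol p

lemma integrable_comp (ρ σ x : ℝ) (q : Polynomial ℝ) :
    Integrable (fun z => q.eval (ρ * x + σ * z)) (gaussianReal 0 1) := by
  have h := integrable_gaussianReal_poly (q.comp (C (ρ * x) + C σ * X))
  simpa [eval_comp] using h

lemma integrable_comp' (ρ σ x : ℝ) (q : Polynomial ℝ) :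
    Integrable (fun z => z * q.eval (ρ * x + σ * z)) (gaussianReal 0 1) := by
  have h := integrable_gaussianReal_poly ((X : Polynomial ℝ) * q.comp (C (ρ * x) + C σ * X))
  simpa [eval_comp] using h

lemma integral_mul_self (ρ σ x : ℝ) (q : Polynomial ℝ) :
    ∫ z, z * q.eval (ρ * x + σ * z) ∂(gaussianReal 0 1) =
      σ * ∫ z, (derivative q).eval (ρ * x + σ * z) ∂(gaussianReal 0 1) := by
  have h := ibp_gauss (q.comp (C (ρ * x) + C σ * X))
  rw [derivative_comp] at h
  simp only [eval_comp, eval_mul, eval_add, eval_C, eval_X, derivative_add, derivative_C,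
    derivative_mul, derivative_X, eval_sub, zero_add, mul_one, zero_mul, add_zero, mul_zero] at h
  rw [← h, integral_const_mul]

lemma key (ρ σ : ℝ) (hσ : σ ^ 2 = 1 - ρ ^ 2) (x : ℝ) : ∀ k : ℕ,
    ∫ z, (Hr k).eval (ρ * x + σ * z) ∂(gaussianReal 0 1) = ρ ^ k * (Hr k).eval x := by
  have hz : ∫ z, z ∂(gaussianReal 0 1) = 0 := by
    have h := integral_mul_self ρ σ x 1
    simpa using h
  intro k
  induction k using Nat.twoStepInduction with
  | zero => simp [Hr_zero]
  | one =>
    have hX : Hr 1 = X := by rw [Hr_succ, Hr_zero]; simp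
    rw [hX]
    simp only [eval_X]
    rw [integral_add (integrable_const _) ((integrable_gaussianReal_poly X).const_mul σ |>.congr
      (Filter.Eventually.of_forall fun z => by simp))]
    rw [integral_const_mul σ _, hz, integral_const]
    simp
  | more k ih1 ih2 =>
    have hrec : Hr (k + 2) = X * Hr (k + 1) - ((k : Polynomial ℝ) + 1) * Hr k := by
      rw [Hr_succ (k + 1), derivative_Hr]
    have h1 : Integrable (fun z => (ρ * x) * (Hr (k + 1)).eval (ρ * x + σ * z))
        (gaussianReal 0 1) := (integrable_comp ρ σ x _).const_mul _
    have h2 : Integrable (fun z => σ * (z * (Hr (k + 1)).eval (ρ * x + σ * z)))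
        (gaussianReal 0 1) := (integrable_comp' ρ σ x _).const_mul _
    have h3 : Integrable (fun z => ((k : ℝ) + 1) * (Hr k).eval (ρ * x + σ * z))
        (gaussianReal 0 1) := (integrable_comp ρ σ x _).const_mul _
    have hmid : ∫ z, z * (Hr (k + 1)).eval (ρ * x + σ * z) ∂(gaussianReal 0 1)
        = σ * (((k : ℝ) + 1) * (ρ ^ k * (Hr k).eval x)) := by
      rw [integral_mul_self ρ σ x, derivative_Hr]
      congr 1
      rw [show (fun z => (((k : Polynomial ℝ) + 1) * Hr k).eval (ρ * x + σ * z))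
          = (fun z => ((k : ℝ) + 1) * (Hr k).eval (ρ * x + σ * z)) from funext fun z => by simp]
      rw [integral_const_mul, ih1]
    calc ∫ z, (Hr (k + 2)).eval (ρ * x + σ * z) ∂(gaussianReal 0 1)
        = ∫ z, ((ρ * x) * (Hr (k + 1)).eval (ρ * x + σ * z)
            + σ * (z * (Hr (k + 1)).eval (ρ * x + σ * z)))
            - ((k : ℝ) + 1) * (Hr k).eval (ρ * x + σ * z) ∂(gaussianReal 0 1) := by
          congr 1
          funext z
          rw [hrec]
          simp only [eval_sub, eval_mul, eval_add, eval_X, eval_natCast, eval_one]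
          ring
      _ = ((ρ * x) * ∫ z, (Hr (k + 1)).eval (ρ * x + σ * z) ∂(gaussianReal 0 1)
            + σ * ∫ z, z * (Hr (k + 1)).eval (ρ * x + σ * z) ∂(gaussianReal 0 1))
            - ((k : ℝ) + 1) * ∫ z, (Hr k).eval (ρ * x + σ * z) ∂(gaussianReal 0 1) := by
          have h12 : Integrable (fun z => (ρ * x) * (Hr (k + 1)).eval (ρ * x + σ * z)
              + σ * (z * (Hr (k + 1)).eval (ρ * x + σ * z))) (gaussianReal 0 1) := h1.add h2
          rw [integral_sub h12 h3, integral_add h1 h2,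
            integral_const_mul, integral_const_mul, integral_const_mul]
      _ = ρ ^ (k + 2) * (Hr (k + 2)).eval x := by
          rw [ih1, ih2, hmid, hrec]
          simp only [eval_sub, eval_mul, eval_add, eval_X, eval_natCast, eval_one]
          linear_combination (((k : ℝ) + 1) * ρ ^ k * (Hr k).eval x) * hσ

end Aux

/-- For every `k ∈ ℕ` and `ρ ∈ (0,1)`, the normalized probabilist's Hermite
polynomial `h_k` is an eigenfunction of the Ornstein–Uhlenbeck operator: `U_ρ h_k = ρ^k h_k`. -/
theorem ouOp_normalizedHermite_eigenfunction (k : ℕ) (ρ : ℝ) (hρ : ρ ∈ Set.Ioo (0 : ℝ) 1) :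
    ouOp ρ (normalizedHermite k) = fun x => ρ ^ k * normalizedHermite k x := by
  funext x
  have hσ : (Real.sqrt (1 - ρ ^ 2)) ^ 2 = 1 - ρ ^ 2 :=
    Real.sq_sqrt (by nlinarith [hρ.1, hρ.2])
  have h := key ρ _ hσ x k
  simp only [ouOp, normalizedHermite]
  rw [MeasureTheory.integral_div]
  rw [show (fun z => ((Polynomial.hermite k).map (Int.castRingHom ℝ)).eval
      (ρ * x + Real.sqrt (1 - ρ ^ 2) * z)) = (fun z => (Hr k).eval
      (ρ * x + Real.sqrt (1 - ρ ^ 2) * z)) from rfl] at *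
  rw [h]
  unfold Hr
  ring
end

section
/- For odd k, the Hermite coefficient of the sign function satisfies E_{G∼N(0,1)}[h_k(G) · sign(G)] ≠ 0; moreover |E[h_k(G) sign(G)]| ≥ c/k^{3/4} for some universal constant c > 0. -/
open MeasureTheory ProbabilityTheory

/-- The sign function `sign(x)`. -/
noncomputable def signFun (x : ℝ) : ℝ := if x < 0 then -1 else 1

open Real Polynomial Set Filter Nat

noncomputable def P (n : ℕ) : Polynomial ℝ := (Polynomial.hermite n).map (Int.castRingHom ℝ)


-- A0 : integrability of monomial * gaussian
lemma pow_mul_gauss_integrable (n : ℕ) :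
    Integrable (fun x : ℝ => x ^ n * Real.exp (-(x ^ 2 / 2))) := by
  have hbd : ∀ x : ℝ, ‖x ^ n * Real.exp (-(x ^ 2 / 2))‖
      ≤ (n.factorial * Real.exp 1) * Real.exp (-(1/4) * x ^ 2) := by
    intro x
    have h1 : |x| ^ n / n.factorial ≤ Real.exp |x| := by
      calc |x| ^ n / n.factorial ≤ ∑ i ∈ Finset.range (n+1), |x| ^ i / i.factorial := by
            exact Finset.single_le_sum (f := fun i => |x| ^ i / i.factorial)
              (fun i _ => by positivity) (Finset.self_mem_range_succ n)
        _ ≤ Real.exp |x| := Real.sum_le_exp_of_nonneg (abs_nonneg x) _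
    have h2 : |x| ≤ x ^ 2 / 4 + 1 := by nlinarith [sq_nonneg (|x| - 2), sq_abs x]
    have h3 : |x| ^ n ≤ n.factorial * Real.exp (x ^ 2 / 4 + 1) := by
      calc |x| ^ n ≤ n.factorial * Real.exp |x| := by
            rw [div_le_iff₀ (by positivity)] at h1; linarith [h1]
        _ ≤ n.factorial * Real.exp (x ^ 2 / 4 + 1) :=
            mul_le_mul_of_nonneg_left (Real.exp_le_exp.2 h2) (by positivity)
    rw [norm_mul, norm_pow, norm_eq_abs, norm_eq_abs, abs_exp, ← abs_pow, abs_pow]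
    calc |x| ^ n * Real.exp (-(x ^ 2 / 2))
        ≤ (n.factorial * Real.exp (x ^ 2 / 4 + 1)) * Real.exp (-(x ^ 2 / 2)) :=
          mul_le_mul_of_nonneg_right h3 (Real.exp_pos _).le
      _ = (n.factorial * Real.exp 1) * Real.exp (-(1/4) * x ^ 2) := by
          rw [mul_assoc, mul_assoc, ← Real.exp_add, ← Real.exp_add]; ring_nf
  refine Integrable.mono' (((integrable_exp_neg_mul_sq (by norm_num : (0:ℝ) < 1/4)).const_mul
    (n.factorial * Real.exp 1))) ?_ (Filter.Eventually.of_forall hbd)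
  exact ((continuous_pow n).mul ((continuous_id.pow 2).div_const 2).neg.rexp).aestronglyMeasurable

lemma poly_mul_gauss_integrable (p : Polynomial ℝ) :
    Integrable (fun x : ℝ => p.eval x * Real.exp (-(x ^ 2 / 2))) := by
  induction p using Polynomial.induction_on' with
  | add p q hp hq => have h := hp.add hq; simp [add_mul] at h ⊢; exact h
  | monomial n a =>
      simpa [Polynomial.eval_monomial, mul_assoc] using (pow_mul_gauss_integrable n).const_mul a

lemma P_succ (n : ℕ) : P (n+1) = X * P n - derivative (P n) := by
  unfold P
  rw [Polynomial.hermite_succ, Polynomial.map_sub, Polynomial.map_mul, Polynomial.map_X,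
    derivative_map]

lemma hermite_deriv (n : ℕ) (x : ℝ) :
    HasDerivAt (fun y : ℝ => (P n).eval y * Real.exp (-(y ^ 2 / 2)))
      (-((P (n+1)).eval x * Real.exp (-(x ^ 2 / 2)))) x := by
  have h1 : HasDerivAt (fun y : ℝ => (P n).eval y) ((derivative (P n)).eval x) x :=
    (P n).hasDerivAt x
  have h2 : HasDerivAt (fun y : ℝ => Real.exp (-(y ^ 2 / 2)))
      (-x * Real.exp (-(x ^ 2 / 2))) x := by
    have : HasDerivAt (fun y : ℝ => -(y ^ 2 / 2)) (-x) x := by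
      have h := ((hasDerivAt_pow 2 x).div_const 2).neg; simp at h; exact h
    simpa [mul_comm] using this.exp
  have := h1.mul h2
  refine this.congr_deriv ?_
  rw [P_succ]
  simp [eval_mul]
  ring

lemma hermite_gauss_tendsto (n : ℕ) :
    Tendsto (fun x : ℝ => (P n).eval x * Real.exp (-(x ^ 2 / 2))) atTop (nhds 0) := by
  have key : Tendsto (fun x : ℝ => (P n).eval x / Real.exp x) atTop (nhds 0) :=
    Polynomial.tendsto_div_exp_atTop (P n)
  have h2 : ∀ᶠ x : ℝ in atTop, ‖(P n).eval x * Real.exp (-(x ^ 2 / 2))‖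
      ≤ ‖(P n).eval x / Real.exp x‖ := by
    filter_upwards [eventually_ge_atTop (2 : ℝ)] with x hx
    rw [norm_mul, norm_div, div_eq_mul_inv]
    refine mul_le_mul_of_nonneg_left ?_ (norm_nonneg _)
    rw [norm_eq_abs, norm_eq_abs, abs_exp, abs_exp, ← Real.exp_neg, Real.exp_le_exp]
    nlinarith
  exact squeeze_zero_norm' h2 (by simpa using key.norm)

lemma integral_Ioi_hermite (n : ℕ) :
    ∫ x in Ioi (0:ℝ), (P (n+1)).eval x * Real.exp (-(x ^ 2 / 2)) = (P n).eval 0 := by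
  have h := integral_Ioi_of_hasDerivAt_of_tendsto' (a := (0:ℝ))
    (f := fun y => (P n).eval y * Real.exp (-(y ^ 2 / 2)))
    (f' := fun x => -((P (n+1)).eval x * Real.exp (-(x ^ 2 / 2))))
    (fun x _ => hermite_deriv n x)
    (((poly_mul_gauss_integrable (P (n+1))).neg).integrableOn)
    (hermite_gauss_tendsto n)
  rw [integral_neg] at h
  simp only [zero_sub] at h
  have h0 : (P n).eval 0 * Real.exp (-((0:ℝ) ^ 2 / 2)) = (P n).eval 0 := by norm_num
  rw [h0] at h
  linarith

lemma P_eval_neg {k : ℕ} (hk : Odd k) (x : ℝ) : (P k).eval (-x) = -(P k).eval x := by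
  have hdeg : (P k).natDegree < k + 1 := lt_of_le_of_lt Polynomial.natDegree_map_le
      (by rw [Polynomial.natDegree_hermite]; exact Nat.lt_succ_self k)
  have hs : ∀ y : ℝ, (P k).eval y = ∑ i ∈ Finset.range (k+1), (P k).coeff i * y ^ i := fun y =>
    Polynomial.eval_eq_sum_range' hdeg y
  rw [hs, hs, ← Finset.sum_neg_distrib]
  refine Finset.sum_congr rfl fun i _ => ?_
  rcases Nat.even_or_odd (k + i) with hpar | hpar
  · have hi : Odd i := by
      rcases Nat.even_or_odd i with h | h
      · exact absurd (hk.add_even h) (by simpa using hpar)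
      · exact h
    rw [hi.neg_pow]; ring
  · have hc : (P k).coeff i = 0 := by
      unfold P
      rw [Polynomial.coeff_map, Polynomial.coeff_hermite_of_odd_add hpar]
      simp
    rw [hc]; ring

lemma sign_integral_eq {k : ℕ} (hk : Odd k) :
    ∫ x : ℝ, (P k).eval x * signFun x * Real.exp (-(x ^ 2 / 2))
      = 2 * ∫ x in Ioi (0:ℝ), (P k).eval x * Real.exp (-(x ^ 2 / 2)) := by
  set G : ℝ → ℝ := fun x => (P k).eval x * Real.exp (-(x ^ 2 / 2)) with hG
  have hGint : Integrable G := poly_mul_gauss_integrable (P k)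
  have hFint : Integrable (fun x => (P k).eval x * signFun x * Real.exp (-(x ^ 2 / 2))) := by
    apply hGint.mono
    · apply AEStronglyMeasurable.mul ?_ (Continuous.aestronglyMeasurable (by continuity))
      apply AEStronglyMeasurable.mul ((P k).continuous_aeval).aestronglyMeasurable
      · exact (Measurable.ite (measurableSet_lt measurable_id measurable_const)
          measurable_const measurable_const).aestronglyMeasurable
    · refine Filter.Eventually.of_forall fun x => ?_
      have hsf : |signFun x| = 1 := by unfold signFun; split <;> norm_num
      simp only [norm_mul, norm_eq_abs, hsf, hG, mul_one, le_refl]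
  have hsplit : (∫ x in Iio (0:ℝ), (P k).eval x * signFun x * Real.exp (-(x ^ 2 / 2)))
      + (∫ x in Ici (0:ℝ), (P k).eval x * signFun x * Real.exp (-(x ^ 2 / 2)))
      = ∫ x : ℝ, (P k).eval x * signFun x * Real.exp (-(x ^ 2 / 2)) :=
    intervalIntegral.integral_Iio_add_Ici hFint.integrableOn hFint.integrableOn
  have hIci : (∫ x in Ici (0:ℝ), (P k).eval x * signFun x * Real.exp (-(x ^ 2 / 2)))
      = ∫ x in Ioi (0:ℝ), G x := by
    rw [integral_Ici_eq_integral_Ioi]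
    refine setIntegral_congr_fun measurableSet_Ioi fun x hx => ?_
    have : signFun x = 1 := by unfold signFun; rw [if_neg (not_lt.2 (le_of_lt hx))]
    simp [this, hG]
  have hIio : (∫ x in Iio (0:ℝ), (P k).eval x * signFun x * Real.exp (-(x ^ 2 / 2)))
      = ∫ x in Ioi (0:ℝ), G x := by
    have h1 : (∫ x in Iio (0:ℝ), (P k).eval x * signFun x * Real.exp (-(x ^ 2 / 2)))
        = ∫ x in Iio (0:ℝ), -G x := by
      refine setIntegral_congr_fun measurableSet_Iio fun x hx => ?_
      have : signFun x = -1 := by unfold signFun; rw [if_pos (mem_Iio.mp hx)]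
      simp [this, hG]
    have h2 : (∫ x in Ioi (0:ℝ), (-G) (-x)) = ∫ x in Iic (-(0:ℝ)), (-G) x :=
      integral_comp_neg_Ioi 0 (-G)
    have h3 : ∀ x : ℝ, (-G) (-x) = G x := by
      intro x
      simp only [Pi.neg_apply, hG, P_eval_neg hk, neg_sq]
      ring_nf
    simp only [h3, neg_zero, Pi.neg_apply] at h2
    rw [h1, h2, integral_Iic_eq_integral_Iio]
  rw [← hsplit, hIci, hIio]
  ring

lemma measurable_signFun : Measurable signFun :=
  Measurable.ite (measurableSet_lt measurable_id measurable_const)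
    measurable_const measurable_const

-- conversion of the gaussian integral to a Lebesgue integral
lemma integral_gauss_eq (h : ℝ → ℝ) :
    ∫ x, h x ∂(gaussianReal 0 1)
      = ∫ x, gaussianPDFReal 0 1 x * h x := by
  rw [gaussianReal_of_var_ne_zero 0 one_ne_zero]
  have h1 : gaussianPDF 0 1 = fun x =>
      (((gaussianPDFReal 0 1 x).toNNReal : NNReal) : ENNReal) := by
    funext x
    rw [gaussianPDF, ENNReal.ofReal]
  rw [h1, integral_withDensity_eq_integral_smul
    ((measurable_gaussianPDFReal 0 1).real_toNNReal) h]
  congr 1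
  funext x
  rw [NNReal.smul_def, smul_eq_mul, Real.coe_toNNReal _ (gaussianPDFReal_nonneg 0 1 x)]

lemma df_sq (m : ℕ) : ((2*m-1)‼)^2 * 4^m * m.factorial ^ 2 = ((2*m).factorial)^2 := by
  have h1 : (2*m).factorial = 2^m * m.factorial * (2*m-1)‼ := by
    cases m with
    | zero => rfl
    | succ n =>
        have h4 : 2*(n+1) - 1 = 2*n+1 := by omega
        rw [h4, show 2*(n+1) = (2*n+1) + 1 by ring, Nat.factorial_eq_mul_doubleFactorial,
          show (2*n+1) + 1 = 2*(n+1) by ring, Nat.doubleFactorial_two_mul]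
  rw [h1]
  have h5 : (4:ℕ)^m = 2^(m*2) := by
    rw [show (4:ℕ) = 2^2 by norm_num, ← pow_mul, mul_comm]
  rw [h5]
  ring

lemma df_cb (m : ℕ) : ((2*m-1)‼)^2 * 4^m = (2*m).factorial * m.centralBinom := by
  have h := df_sq m
  have hc : m.centralBinom * m.factorial * m.factorial = (2*m).factorial := by
    rw [Nat.centralBinom_eq_two_mul_choose]
    have := Nat.choose_mul_factorial_mul_factorial (show m ≤ 2*m by omega)
    rwa [show 2*m - m = m by omega] at this
  have h2 : ((2*m-1)‼)^2 * 4^m * m.factorial ^ 2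
      = ((2*m).factorial * m.centralBinom) * m.factorial ^ 2 := by
    rw [h]
    nlinarith [hc]
  exact Nat.eq_of_mul_eq_mul_right (by positivity) h2

lemma cb_lower : ∀ m : ℕ, 1 ≤ m → 16^m ≤ 4 * m * m.centralBinom^2 := by
  intro m hm
  induction m with
  | zero => omega
  | succ n ih =>
    rcases Nat.eq_or_lt_of_le hm with h | h
    · simp [← h]
      rw [show Nat.centralBinom 1 = 2 from rfl]
      norm_num
    · have hn : 1 ≤ n := by omega
      have IH := ih hn
      have key : (n+1) * Nat.centralBinom (n+1) = 2 * (2*n+1) * Nat.centralBinom n :=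
        Nat.succ_mul_centralBinom_succ n
      have h1 : (n+1)^2 * 16^(n+1) ≤ (n+1)^2 * (4 * (n+1) * Nat.centralBinom (n+1)^2) := by
        have expand : (n+1)^2 * (4 * (n+1) * Nat.centralBinom (n+1)^2)
            = 4 * (n+1) * ((n+1) * Nat.centralBinom (n+1))^2 := by ring
        rw [expand, key]
        have lhs_eq : (n+1)^2 * 16^(n+1) = 16 * (n+1)^2 * 16^n := by ring
        rw [lhs_eq]
        calc 16 * (n+1)^2 * 16^n ≤ 16 * (n+1)^2 * (4 * n * Nat.centralBinom n^2) :=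
              Nat.mul_le_mul_left _ IH
          _ ≤ 4 * (n+1) * (2 * (2*n+1) * Nat.centralBinom n)^2 := by nlinarith [sq_nonneg (Nat.centralBinom n)]
      exact Nat.le_of_mul_le_mul_left h1 (by positivity)

lemma final_bound (m : ℕ) :
    (1/2 : ℝ) / ((2*m+1 : ℕ) : ℝ) ^ ((3:ℝ)/4)
      ≤ 2 * ((2*m-1)‼ : ℝ) * ((Real.sqrt (2*π))⁻¹ * (Real.sqrt ((2*m+1).factorial))⁻¹) := by
  set k : ℕ := 2*m+1 with hk
  set D : ℝ := ((2*m-1)‼ : ℝ) with hD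
  set C : ℝ := (m.centralBinom : ℝ) with hC
  set F : ℝ := ((2*m).factorial : ℝ) with hF
  have hkpos : (0:ℝ) < (k:ℝ) := by positivity
  have hDpos : 0 < D := by
    rw [hD]; exact_mod_cast Nat.doubleFactorial_pos _
  have hCpos : 0 < C := by rw [hC]; exact_mod_cast Nat.centralBinom_pos m
  have hFpos : 0 < F := by rw [hF]; exact_mod_cast Nat.factorial_pos _
  have hkfac : ((k).factorial : ℝ) = (k:ℝ) * F := by
    rw [hk, hF]; push_cast [Nat.factorial_succ]; ring
  have hDC : D^2 * 4^m = F * C := by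
    rw [hD, hC, hF]; exact_mod_cast df_cb m
  -- rewrite RHS as b, LHS as a, compare squares
  set a : ℝ := (1/2 : ℝ) / ((k : ℕ) : ℝ) ^ ((3:ℝ)/4) with ha
  set b : ℝ := 2 * D * ((Real.sqrt (2*π))⁻¹ * (Real.sqrt ((k).factorial))⁻¹) with hb
  have hbpos : 0 < b := by
    rw [hb]
    have h2pi : (0:ℝ) < 2*π := by positivity
    have : (0:ℝ) < ((k).factorial : ℝ) := by exact_mod_cast Nat.factorial_pos k
    positivity
  have hapos : 0 < a := by rw [ha]; positivity
  rw [← pow_le_pow_iff_left₀ hapos.le hbpos.le (two_ne_zero)]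
  have ha2 : a^2 = (1/4) / ((k:ℝ) ^ ((3:ℝ)/2)) := by
    rw [ha, div_pow, ← Real.rpow_natCast (((k:ℕ):ℝ) ^ ((3:ℝ)/4)) 2, ← Real.rpow_mul hkpos.le]
    norm_num
  have hb2 : b^2 = 4 * D^2 * ((2*π)⁻¹ * (((k).factorial : ℝ))⁻¹) := by
    rw [hb]
    have h1 : (Real.sqrt (2*π))^2 = 2*π := Real.sq_sqrt (by positivity)
    have h2 : (Real.sqrt ((k).factorial))^2 = ((k).factorial : ℝ) :=
      Real.sq_sqrt (by positivity)
    rw [mul_pow, mul_pow, mul_pow, inv_pow, inv_pow, h1, h2]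
    norm_num
  rw [ha2, hb2, hkfac]
  -- now a pure inequality
  set K : ℝ := (k:ℝ) ^ ((3:ℝ)/2) with hKdef
  have hKval : K = (k:ℝ) * Real.sqrt (k:ℝ) := by
    rw [hKdef, show ((3:ℝ)/2) = 1 + 1/2 by norm_num, Real.rpow_add hkpos, Real.rpow_one,
      Real.sqrt_eq_rpow]
  have hKpos : 0 < K := by rw [hKval]; positivity
  rw [div_le_iff₀ hKpos]
  -- goal : 1/4 ≤ 4*D^2*((2π)⁻¹ * (k*F)⁻¹) * K
  have hsm : Real.sqrt m ≤ Real.sqrt k := by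
    apply Real.sqrt_le_sqrt; rw [hk]; push_cast; linarith
  have hpi : π ≤ 4 := Real.pi_le_four
  have hDF : D^2 = F * C / 4^m := by
    rw [← hDC]; field_simp
  rcases Nat.eq_zero_or_pos m with hm | hm
  · subst hm
    have hC1 : C = 1 := by rw [hC]; norm_num [Nat.centralBinom_zero]
    have hD1 : D = 1 := by rw [hD]; norm_num
    have hF1 : F = 1 := by rw [hF]; norm_num
    have hk1 : (k:ℝ) = 1 := by rw [hk]; norm_num
    have hK1 : K = 1 := by rw [hKval, hk1]; simp
    rw [hD1, hF1, hk1, hK1]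
    have hpipos : (0:ℝ) < π := Real.pi_pos
    rw [show (4:ℝ) * 1^2 * ((2*π)⁻¹ * (1*1)⁻¹) * 1 = 2/π by field_simp; ring]
    rw [le_div_iff₀ hpipos]; linarith
  · have hcb : (16:ℝ)^m ≤ 4 * m * C^2 := by
      rw [hC]; exact_mod_cast cb_lower m hm
    have hmpos : (0:ℝ) < (m:ℝ) := by exact_mod_cast hm
    have hsmpos : 0 < Real.sqrt m := Real.sqrt_pos.2 hmpos
    have h4m : (0:ℝ) < 4^m := by positivity
    -- C * (2√m) ≥ 4^m
    have hCsqrt : (4:ℝ)^m ≤ C * (2 * Real.sqrt m) := by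
      rw [← pow_le_pow_iff_left₀ (by positivity : (0:ℝ) ≤ (4:ℝ)^m)
        (by positivity : (0:ℝ) ≤ C * (2 * Real.sqrt m)) (two_ne_zero)]
      have hsq : (Real.sqrt m)^2 = (m:ℝ) := Real.sq_sqrt hmpos.le
      have h16 : ((4:ℝ)^m)^2 = 16^m := by
        rw [← pow_mul, mul_comm, pow_mul]; norm_num
      rw [h16]
      calc (16:ℝ)^m ≤ 4 * m * C^2 := hcb
        _ = (C * (2 * Real.sqrt m))^2 := by rw [mul_pow, mul_pow, hsq]; ring
    -- π k √m ≤ 4 K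
    have hmainK : π * (k:ℝ) * Real.sqrt m ≤ 4 * K := by
      rw [hKval]
      calc π * (k:ℝ) * Real.sqrt m ≤ 4 * (k:ℝ) * Real.sqrt k := by
            apply mul_le_mul (mul_le_mul hpi le_rfl hkpos.le (by norm_num)) hsm hsmpos.le
              (by positivity)
        _ = 4 * ((k:ℝ) * Real.sqrt k) := by ring
    -- assemble
    have hfinal : (1/4 : ℝ) ≤ 4 * D ^ 2 * ((2 * π)⁻¹ * ((k:ℝ) * F)⁻¹) * K := by
      rw [hDF]
      have hexp : 4 * (F * C / 4 ^ m) * ((2 * π)⁻¹ * ((k:ℝ) * F)⁻¹) * K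
          = 2 * (C / 4^m) * K / (π * (k:ℝ)) := by
        field_simp
        ring
      rw [hexp, le_div_iff₀ (by positivity)]
      -- 1/4 * (π k) ≤ 2 (C/4^m) K
      have hC4 : 1 / (2 * Real.sqrt m) ≤ C / 4^m := by
        rw [div_le_div_iff₀ (by positivity) h4m]
        linarith [hCsqrt]
      calc (1/4 : ℝ) * (π * (k:ℝ))
          ≤ 2 * (1 / (2 * Real.sqrt m)) * K := by
            rw [show (2:ℝ) * (1 / (2 * Real.sqrt m)) * K = K / Real.sqrt m by
              field_simp]
            rw [le_div_iff₀ hsmpos]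
            linarith [hmainK]
        _ ≤ 2 * (C / 4^m) * K := by
            apply mul_le_mul_of_nonneg_right (mul_le_mul_of_nonneg_left hC4 (by norm_num))
              hKpos.le
    linarith [hfinal]

lemma P_eval_zero (m : ℕ) : (P (2*m)).eval 0 = (-1:ℝ)^m * ((2*m-1)‼ : ℝ) := by
  unfold P
  rw [← Polynomial.coeff_zero_eq_eval_zero, Polynomial.coeff_map]
  have h := Polynomial.coeff_hermite_explicit m 0
  rw [Nat.add_zero] at h
  rw [h]
  push_cast
  simp

lemma gauss_value (m : ℕ) :
    ∫ x, normalizedHermite (2*m+1) x * signFun x ∂(gaussianReal 0 1)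
      = ((Real.sqrt (2*π))⁻¹ * (Real.sqrt ((2*m+1).factorial))⁻¹)
          * (2 * ((-1:ℝ)^m * ((2*m-1)‼ : ℝ))) := by
  set k : ℕ := 2*m+1 with hk
  rw [integral_gauss_eq]
  have hpt : ∀ x : ℝ, gaussianPDFReal 0 1 x * (normalizedHermite k x * signFun x)
      = ((Real.sqrt (2*π))⁻¹ * (Real.sqrt (k.factorial))⁻¹)
        * ((P k).eval x * signFun x * Real.exp (-(x ^ 2 / 2))) := by
    intro x
    rw [gaussianPDFReal]
    unfold normalizedHermite P
    push_cast
    rw [show ((2:ℝ) * π * 1) = 2 * π by ring, show (-(x - 0)^2/(2*1) : ℝ) = -(x^2/2) by ring]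
    rw [div_eq_mul_inv]
    ring
  simp_rw [hpt]
  rw [MeasureTheory.integral_const_mul, sign_integral_eq ⟨m, by omega⟩, hk,
    integral_Ioi_hermite (2*m), P_eval_zero]

/-- For odd `k`, the Hermite coefficient `E_{G∼N(0,1)}[h_k(G)·sign(G)]` is nonzero;
moreover there is a universal constant `c > 0` with `|E[h_k(G) sign(G)]| ≥ c / k^{3/4}`. -/
theorem hermite_coeff_sign_lower_bound :
    ∃ c : ℝ, 0 < c ∧ ∀ k : ℕ, Odd k →
      (∫ x, normalizedHermite k x * signFun x ∂(gaussianReal 0 1)) ≠ 0 ∧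
      c / (k : ℝ) ^ ((3 : ℝ) / 4)
        ≤ |∫ x, normalizedHermite k x * signFun x ∂(gaussianReal 0 1)| := by
  refine ⟨1/2, by norm_num, fun k hk => ?_⟩
  obtain ⟨m, rfl⟩ := hk
  rw [gauss_value m]
  have hDpos : (0:ℝ) < ((2*m-1)‼ : ℝ) := by exact_mod_cast Nat.doubleFactorial_pos _
  have hfac : (0:ℝ) < (((2*m+1).factorial : ℕ) : ℝ) := by exact_mod_cast Nat.factorial_pos _
  have hc1pos : (0:ℝ) < (Real.sqrt (2*π))⁻¹ * (Real.sqrt ((2*m+1).factorial))⁻¹ := by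
    have : (0:ℝ) < 2*π := by positivity
    positivity
  constructor
  · have habs : ((Real.sqrt (2*π))⁻¹ * (Real.sqrt ((2*m+1).factorial))⁻¹)
        * (2 * ((-1:ℝ)^m * ((2*m-1)‼ : ℝ))) ≠ 0 := by
      apply mul_ne_zero (ne_of_gt hc1pos)
      apply mul_ne_zero two_ne_zero
      apply mul_ne_zero (pow_ne_zero _ (by norm_num)) (ne_of_gt hDpos)
    exact habs
  · have habs : |((Real.sqrt (2*π))⁻¹ * (Real.sqrt ((2*m+1).factorial))⁻¹)
        * (2 * ((-1:ℝ)^m * ((2*m-1)‼ : ℝ)))|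
        = 2 * ((2*m-1)‼ : ℝ) * ((Real.sqrt (2*π))⁻¹ * (Real.sqrt ((2*m+1).factorial))⁻¹) := by
      rw [abs_mul, abs_mul, abs_mul, abs_mul, abs_pow, abs_neg, abs_one, one_pow, one_mul,
        abs_of_pos hDpos, abs_two]
      rw [abs_of_pos (by positivity : (0:ℝ) < (Real.sqrt (2*π))⁻¹),
        abs_of_pos (by positivity : (0:ℝ) < (Real.sqrt (((2*m+1).factorial : ℕ) : ℝ))⁻¹)]
      ring
    rw [habs]
    exact_mod_cast final_bound m
end
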